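/- Let F be the free group on generators a and b. For integers P ≥ 2 and S ≥ 2, the element α = a^P·b^S is not primitive in F. -/
import Mathlib

/-! Auxiliary: the affine group over `ZMod p`, i.e. maps `t ↦ a t + b` with `a` a unit. -/

structure AffGrp (p : ℕ) where
  b : ZMod p
  a : (ZMod p)ˣ

namespace AffGrp

variable {p : ℕ}

@[ext] lemma ext' {x y : AffGrp p} (h1 : x.b = y.b) (h2 : x.a = y.a) : x = y := by
  cases x; cases y; simp_all

instance : Mul (AffGrp p) := ⟨fun x y => ⟨x.b + (x.a : ZMod p) * y.b, x.a * y.a⟩⟩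
instance : One (AffGrp p) := ⟨⟨0, 1⟩⟩
instance : Inv (AffGrp p) := ⟨fun x => ⟨-(((x.a⁻¹ : (ZMod p)ˣ) : ZMod p) * x.b), x.a⁻¹⟩⟩

@[simp] lemma mul_b (x y : AffGrp p) : (x * y).b = x.b + (x.a : ZMod p) * y.b := rfl
@[simp] lemma mul_a (x y : AffGrp p) : (x * y).a = x.a * y.a := rfl
@[simp] lemma one_b : (1 : AffGrp p).b = 0 := rfl
@[simp] lemma one_a : (1 : AffGrp p).a = 1 := rfl
@[simp] lemma inv_b (x : AffGrp p) :
    (x⁻¹).b = -(((x.a⁻¹ : (ZMod p)ˣ) : ZMod p) * x.b) := rfl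
@[simp] lemma inv_a (x : AffGrp p) : (x⁻¹).a = x.a⁻¹ := rfl

instance : Group (AffGrp p) where
  mul_assoc x y z := by ext <;> simp <;> ring
  one_mul x := by ext <;> simp
  mul_one x := by ext <;> simp
  inv_mul_cancel x := by
    ext <;> simp

instance : DecidableEq (AffGrp p) := fun x y =>
  decidable_of_iff (x.b = y.b ∧ x.a = y.a) (by cases x; cases y; simp)

def equivProd : AffGrp p ≃ ZMod p × (ZMod p)ˣ where
  toFun x := (x.b, x.a)
  invFun z := ⟨z.1, z.2⟩
  left_inv x := rfl
  right_inv z := rfl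

instance [NeZero p] : Fintype (AffGrp p) := Fintype.ofEquiv _ (equivProd (p := p)).symm

lemma card_affGrp [Fact p.Prime] : Fintype.card (AffGrp p) = p * (p - 1) := by
  rw [Fintype.card_congr (equivProd (p := p)), Fintype.card_prod, ZMod.card,
    ZMod.card_units]

lemma pow_formula (x : AffGrp p) (n : ℕ) :
    x ^ n = ⟨(∑ i ∈ Finset.range n, (x.a : ZMod p) ^ i) * x.b, x.a ^ n⟩ := by
  induction n with
  | zero => ext <;> simp
  | succ n ih =>
      rw [pow_succ, ih]
      ext
      · simp [Finset.sum_range_succ]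
        ring
      · simp [pow_succ]

lemma pow_eq_one [Fact p.Prime] {x : AffGrp p} {n : ℕ} (h : x.a ^ n = 1)
    (hne : x.a ≠ 1) : x ^ n = 1 := by
  have ha : ((x.a : ZMod p)) ^ n = 1 := by
    have := congrArg (Units.val) h
    simpa using this
  have hsum : (∑ i ∈ Finset.range n, (x.a : ZMod p) ^ i) = 0 := by
    have hgeom : (∑ i ∈ Finset.range n, (x.a : ZMod p) ^ i) * ((x.a : ZMod p) - 1)
        = (x.a : ZMod p) ^ n - 1 := geom_sum_mul _ _
    rw [ha, sub_self] at hgeom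
    have hne' : ((x.a : ZMod p)) - 1 ≠ 0 := by
      intro hc
      apply hne
      have : (x.a : ZMod p) = 1 := by linear_combination hc
      exact Units.ext (by simpa using this)
    exact (mul_eq_zero.mp hgeom).resolve_right hne'
  rw [pow_formula, hsum]
  ext <;> simp [h]

lemma zpow_eq_one [Fact p.Prime] {x : AffGrp p} {n : ℕ} {P : ℤ} (h : x.a ^ n = 1)
    (hne : x.a ≠ 1) (hdvd : (n : ℤ) ∣ P) : x ^ P = 1 := by
  obtain ⟨m, rfl⟩ := hdvd
  rw [zpow_mul, zpow_natCast, pow_eq_one h hne, one_zpow]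

end AffGrp

/-- The key counting fact: if `e` is an automorphism of `F₂` carrying a generator to
`a^P b^S`, then in any finite group the number of pairs `(x, y)` with `x^P y^S = 1`
equals the cardinality of the group. -/
lemma primitive_count {G : Type} [Group G] [Fintype G] [DecidableEq G] (P S : ℤ)
    (e : FreeGroup (Fin 2) ≃* FreeGroup (Fin 2))
    (he : e (FreeGroup.of 0) = FreeGroup.of 0 ^ P * FreeGroup.of 1 ^ S) :
    Fintype.card {z : G × G // z.1 ^ P * z.2 ^ S = 1} = Fintype.card G := by
  classical
  set L : G → G → (FreeGroup (Fin 2) →* G) := fun x y => FreeGroup.lift ![x, y] with hL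
  have hLof0 : ∀ x y : G, L x y (FreeGroup.of 0) = x := by intro x y; simp [hL]
  have hLof1 : ∀ x y : G, L x y (FreeGroup.of 1) = y := by intro x y; simp [hL]
  have keyA : ∀ ψ : FreeGroup (Fin 2) →* G,
      L (ψ (FreeGroup.of 0)) (ψ (FreeGroup.of 1)) = ψ := by
    intro ψ
    apply FreeGroup.ext_hom
    intro i
    fin_cases i
    · exact hLof0 _ _
    · exact hLof1 _ _
  set Ψ : G × G ≃ G × G :=
    { toFun := fun z => (L z.1 z.2 (e (FreeGroup.of 0)), L z.1 z.2 (e (FreeGroup.of 1)))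
      invFun := fun z => (L z.1 z.2 (e.symm (FreeGroup.of 0)),
        L z.1 z.2 (e.symm (FreeGroup.of 1)))
      left_inv := by
        rintro ⟨x, y⟩
        have hψ : ∀ w, L (((L x y).comp e.toMonoidHom) (FreeGroup.of 0))
            (((L x y).comp e.toMonoidHom) (FreeGroup.of 1)) w
            = ((L x y).comp e.toMonoidHom) w := fun w =>
          DFunLike.congr_fun (keyA ((L x y).comp e.toMonoidHom)) w
        have h0 := hψ (e.symm (FreeGroup.of 0))
        have h1 := hψ (e.symm (FreeGroup.of 1))
        simp only [MonoidHom.comp_apply, MulEquiv.coe_toMonoidHom,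
          MulEquiv.apply_symm_apply] at h0 h1
        simp only [Prod.mk.injEq]
        constructor
        · rw [h0]; exact hLof0 x y
        · rw [h1]; exact hLof1 x y
      right_inv := by
        rintro ⟨x, y⟩
        have hψ : ∀ w, L (((L x y).comp e.symm.toMonoidHom) (FreeGroup.of 0))
            (((L x y).comp e.symm.toMonoidHom) (FreeGroup.of 1)) w
            = ((L x y).comp e.symm.toMonoidHom) w := fun w =>
          DFunLike.congr_fun (keyA ((L x y).comp e.symm.toMonoidHom)) w
        have h0 := hψ (e (FreeGroup.of 0))
        have h1 := hψ (e (FreeGroup.of 1))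
        simp only [MonoidHom.comp_apply, MulEquiv.coe_toMonoidHom,
          MulEquiv.symm_apply_apply] at h0 h1
        simp only [Prod.mk.injEq]
        constructor
        · rw [h0]; exact hLof0 x y
        · rw [h1]; exact hLof1 x y } with hΨ
  have hval : ∀ z : G × G, (Ψ z).1 = z.1 ^ P * z.2 ^ S := by
    rintro ⟨x, y⟩
    show L x y (e (FreeGroup.of 0)) = x ^ P * y ^ S
    rw [he, map_mul, map_zpow, map_zpow, hLof0, hLof1]
  have step1 : Fintype.card {z : G × G // z.1 ^ P * z.2 ^ S = 1}
      = Fintype.card {z : G × G // (Ψ z).1 = 1} := by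
    apply Fintype.card_congr
    exact Equiv.subtypeEquivRight (fun z => by rw [hval z])
  have step2 : Fintype.card {z : G × G // (Ψ z).1 = 1}
      = Fintype.card {z : G × G // z.1 = 1} := by
    apply Fintype.card_congr
    exact Ψ.subtypeEquiv (fun z => Iff.rfl)
  have step3 : Fintype.card {z : G × G // z.1 = 1} = Fintype.card G := by
    apply Fintype.card_congr
    exact { toFun := fun z => z.val.2
            invFun := fun g => ⟨(1, g), rfl⟩
            left_inv := by
              rintro ⟨⟨x, y⟩, h⟩
              exact Subtype.ext (by rw [Prod.ext_iff]; exact ⟨h.symm, rfl⟩)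
            right_inv := fun g => rfl }
  rw [step1, step2, step3]

theorem stmt_17 (P S : ℤ) (hP : 2 ≤ P) (hS : 2 ≤ S)
    (a b : FreeGroup (Fin 2)) (ha : a = FreeGroup.of 0) (hb : b = FreeGroup.of 1) :
    ¬ ∃ e : FreeGroup (Fin 2) ≃* FreeGroup (Fin 2), e (FreeGroup.of 0) = a ^ P * b ^ S := by
  subst ha hb
  rintro ⟨e, he⟩
  -- pick primes q ∣ P and r ∣ S
  set q := P.natAbs.minFac with hq'
  set r := S.natAbs.minFac with hr'
  have hPnat : P.natAbs ≠ 1 := by omega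
  have hSnat : S.natAbs ≠ 1 := by omega
  have hqprime : q.Prime := Nat.minFac_prime hPnat
  have hrprime : r.Prime := Nat.minFac_prime hSnat
  have hqP : (q : ℤ) ∣ P := by
    have := Nat.minFac_dvd P.natAbs
    exact Int.dvd_natAbs.mp (Int.natCast_dvd_natCast.mpr this)
  have hrS : (r : ℤ) ∣ S := by
    have := Nat.minFac_dvd S.natAbs
    exact Int.dvd_natAbs.mp (Int.natCast_dvd_natCast.mpr this)
  -- a prime p ≡ 1 mod (q*r)
  obtain ⟨p, hpprime, hpgt, hpmod⟩ :=
    Nat.exists_prime_gt_modEq_one (k := q * r) 1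
      (Nat.mul_ne_zero hqprime.pos.ne' hrprime.pos.ne')
  haveI : Fact p.Prime := ⟨hpprime⟩
  have hqr_dvd : q * r ∣ p - 1 := (Nat.modEq_iff_dvd' (by omega)).mp hpmod.symm
  have hq_dvd_units : q ∣ Fintype.card (ZMod p)ˣ := by
    rw [ZMod.card_units]
    exact dvd_trans ⟨r, rfl⟩ hqr_dvd
  have hr_dvd_units : r ∣ Fintype.card (ZMod p)ˣ := by
    rw [ZMod.card_units]
    exact dvd_trans ⟨q, mul_comm q r⟩ hqr_dvd
  obtain ⟨u, hu⟩ := exists_prime_orderOf_dvd_card (G := (ZMod p)ˣ) q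
    (hp := ⟨hqprime⟩) hq_dvd_units
  obtain ⟨v, hv⟩ := exists_prime_orderOf_dvd_card (G := (ZMod p)ˣ) r
    (hp := ⟨hrprime⟩) hr_dvd_units
  have hu1 : u ≠ 1 := by
    intro h; rw [h, orderOf_one] at hu; exact hqprime.one_lt.ne' hu.symm
  have hv1 : v ≠ 1 := by
    intro h; rw [h, orderOf_one] at hv; exact hrprime.one_lt.ne' hv.symm
  have huq : u ^ q = 1 := by rw [← hu]; exact pow_orderOf_eq_one u
  have hvr : v ^ r = 1 := by rw [← hv]; exact pow_orderOf_eq_one v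
  classical
  -- the injection from (ZMod p)² into the solution set
  have hsol : ∀ c d : ZMod p,
      ((⟨c, u⟩ : AffGrp p), (⟨d, v⟩ : AffGrp p)).1 ^ P
        * ((⟨c, u⟩ : AffGrp p), (⟨d, v⟩ : AffGrp p)).2 ^ S = 1 := by
    intro c d
    have h1 : (⟨c, u⟩ : AffGrp p) ^ P = 1 :=
      AffGrp.zpow_eq_one (n := q) huq hu1 hqP
    have h2 : (⟨d, v⟩ : AffGrp p) ^ S = 1 :=
      AffGrp.zpow_eq_one (n := r) hvr hv1 hrS
    simp [h1, h2]
  have hinj : Function.Injective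
      (fun cd : ZMod p × ZMod p =>
        (⟨((⟨cd.1, u⟩ : AffGrp p), (⟨cd.2, v⟩ : AffGrp p)), hsol cd.1 cd.2⟩ :
          {z : AffGrp p × AffGrp p // z.1 ^ P * z.2 ^ S = 1})) := by
    rintro ⟨c, d⟩ ⟨c', d'⟩ h
    simp only [Subtype.mk.injEq, Prod.mk.injEq, AffGrp.mk.injEq] at h
    obtain ⟨⟨h1, -⟩, ⟨h2, -⟩⟩ := h
    exact Prod.ext h1 h2
  have hle := Fintype.card_le_of_injective _ hinj
  have hcount := primitive_count (G := AffGrp p) P S e he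
  rw [hcount, AffGrp.card_affGrp] at hle
  rw [Fintype.card_prod, ZMod.card] at hle
  have hp1 : 1 < p := hpprime.one_lt
  obtain ⟨k, rfl⟩ : ∃ k, p = k + 1 := ⟨p - 1, by omega⟩
  rw [Nat.add_sub_cancel] at hle
  nlinarith
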